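/- Let n, Δ ≥ 2 and n ≥ t ≥ 1. For any rooted tree (T, r) on n vertices with maximum degree Δ(T) ≤ Δ, there exists a collection (T_1, t_1),...,(T_k, t_k) of pairwise vertex-disjoint rooted subtrees of T such that: (i) V(T) = ∪_{i=1}^k V(T_i); (ii) T_i ⊆ T(t_i) for every i; (iii) the depth of t_1,...,t_k is non-decreasing; and (iv) t ≤ |T_i| ≤ 2Δt for every i ∈ [k]. -/
import Mathlib


open Finset

section reach
variable {V : Type*} (par : V → V) (r : V)

lemma iter_mem (R : Finset V) (hR : ∀ u ∈ R, par u ∈ R) :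
    ∀ (j : ℕ) (u : V), u ∈ R → par^[j] u ∈ R := by
  intro j
  induction j with
  | zero => intro u hu; simpa using hu
  | succ j ih =>
    intro u hu
    rw [Function.iterate_succ_apply]
    exact ih _ (hR u hu)

lemma reach_antisymm (hroot : par r = r) (hacyc : ∀ v : V, ∃ j : ℕ, par^[j] v = r)
    {a b : V} (hab : ∃ i, par^[i] a = b) (hba : ∃ j, par^[j] b = a) : a = b := by
  obtain ⟨i, hi⟩ := hab
  obtain ⟨j, hj⟩ := hba
  rcases Nat.eq_zero_or_pos (j + i) with h0 | hp
  · have : i = 0 := by omega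
    simpa [this] using hi
  · have hcyc : par^[j + i] a = a := by
      rw [Function.iterate_add_apply, hi, hj]
    have hk : ∀ k : ℕ, par^[k * (j + i)] a = a := by
      intro k
      induction k with
      | zero => simp
      | succ k ih =>
        have h : (k + 1) * (j + i) = (j + i) + k * (j + i) := by ring
        rw [h, Function.iterate_add_apply, ih, hcyc]
    obtain ⟨m, hm⟩ := hacyc a
    have hge : m ≤ m * (j + i) := Nat.le_mul_of_pos_right m hp
    have har : a = r := by
      have h := hk m
      rw [show m * (j + i) = (m * (j + i) - m) + m by omega,
        Function.iterate_add_apply, hm, Function.iterate_fixed hroot] at h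
      exact h.symm
    subst har
    rw [← hi, Function.iterate_fixed hroot]

lemma reach_total {a b u : V} (ha : ∃ i, par^[i] u = a) (hb : ∃ j, par^[j] u = b) :
    (∃ m, par^[m] a = b) ∨ (∃ m, par^[m] b = a) := by
  obtain ⟨i, hi⟩ := ha
  obtain ⟨j, hj⟩ := hb
  rcases le_total i j with h | h
  · left; exact ⟨j - i, by rw [← hi, ← Function.iterate_add_apply, Nat.sub_add_cancel h, hj]⟩
  · right; exact ⟨i - j, by rw [← hj, ← Function.iterate_add_apply, Nat.sub_add_cancel h, hi]⟩

end reach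

lemma tree_partition_aux {V : Type*} [Fintype V] [DecidableEq V]
    (Δ t : ℕ) (hΔ : 2 ≤ Δ) (ht1 : 1 ≤ t)
    (r : V) (par : V → V) (hroot : par r = r)
    (hacyc : ∀ v : V, ∃ j : ℕ, par^[j] v = r)
    (hdeg : ∀ v : V,
      (Finset.univ.filter (fun u => u ≠ v ∧ par u = v)).card
        + (if v = r then 0 else 1) ≤ Δ) :
    ∀ (N : ℕ) (R : Finset V), R.card ≤ N → (∀ u ∈ R, par u ∈ R) → t ≤ R.card →
    ∃ (k : ℕ) (S : Fin k → Finset V) (tt : Fin k → V),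
      (∀ v ∈ R, ∃ i, v ∈ S i) ∧
      (∀ i, S i ⊆ R) ∧
      (∀ i j, i ≠ j → Disjoint (S i) (S j)) ∧
      (∀ i, tt i ∈ S i) ∧
      (∀ i, ∀ v ∈ S i, v ≠ tt i → par v ∈ S i) ∧
      (∀ i, ∀ v ∈ S i, ∃ j : ℕ, par^[j] v = tt i) ∧
      (∀ i, t ≤ (S i).card ∧ (S i).card ≤ 2 * Δ * t) := by
  intro N
  induction N with
  | zero =>
    intro R h0 _ htR
    omega
  | succ N ih =>
    intro R hRN hRcl htR
    classical
    have hrR : r ∈ R := by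
      obtain ⟨u, hu⟩ := Finset.card_pos.mp (lt_of_lt_of_le ht1 htR)
      obtain ⟨j, hj⟩ := hacyc u
      rw [← hj]
      exact iter_mem par R hRcl j u hu
    by_cases hbig : R.card ≤ 2 * Δ * t
    · exact ⟨1, fun _ => R, fun _ => r,
        fun v hv => ⟨0, hv⟩,
        fun _ => Finset.Subset.refl _,
        fun i j hij => absurd (Subsingleton.elim i j) hij,
        fun _ => hrR,
        fun i u hu _ => hRcl u hu,
        fun i u _ => hacyc u,
        fun i => ⟨htR, hbig⟩⟩
    · push_neg at hbig
      set D : V → Finset V := fun v => R.filter (fun u => ∃ j, par^[j] u = v) with hD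
      have hDr : D r = R := by
        apply Finset.filter_eq_self.mpr
        intro u _
        exact hacyc u
      have hA : r ∈ R.filter (fun v => t ≤ (D v).card) := by
        rw [mem_filter, hDr]
        exact ⟨hrR, htR⟩
      obtain ⟨v, hvA, hvmin⟩ := Finset.exists_min_image
        (R.filter fun v => t ≤ (D v).card) (fun v => (D v).card) ⟨r, hA⟩
      have hvR : v ∈ R := (mem_filter.mp hvA).1
      have hvt : t ≤ (D v).card := (mem_filter.mp hvA).2
      have hvmemD : v ∈ D v := mem_filter.mpr ⟨hvR, 0, rfl⟩
      set C : Finset V := R.filter (fun c => c ≠ v ∧ par c = v) with hC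
      -- children subtrees are small
      have hchild : ∀ c ∈ C, (D c).card < t := by
        intro c hc
        obtain ⟨hcR, hcv, hcp⟩ : c ∈ R ∧ c ≠ v ∧ par c = v := by
          simpa [hC] using hc
        have hsub : D c ⊆ D v := by
          intro u hu
          obtain ⟨huR, j, hj⟩ := mem_filter.mp hu
          exact mem_filter.mpr ⟨huR, j + 1, by
            rw [Function.iterate_succ_apply', hj, hcp]⟩
        have hvnot : v ∉ D c := by
          intro hvc
          obtain ⟨_, hre⟩ := mem_filter.mp hvc
          exact hcv (reach_antisymm par r hroot hacyc ⟨1, by simpa using hcp⟩ hre)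
        have hlt : (D c).card < (D v).card :=
          Finset.card_lt_card ⟨hsub, fun hvv => hvnot (hvv hvmemD)⟩
        by_contra h
        push_neg at h
        exact absurd (hvmin c (mem_filter.mpr ⟨hcR, h⟩)) (not_le.mpr hlt)
      -- children subtrees are pairwise disjoint
      have hdisjC : ∀ c ∈ C, ∀ c' ∈ C, c ≠ c' → Disjoint (D c) (D c') := by
        have key : ∀ c ∈ C, ∀ c' ∈ C, c ≠ c' → (∃ m, par^[m] c = c') → False := by
          intro c hc c' hc' hne ⟨m, hm⟩
          obtain ⟨hcR, hcv, hcp⟩ : c ∈ R ∧ c ≠ v ∧ par c = v := by simpa [hC] using hc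
          obtain ⟨hc'R, hc'v, hc'p⟩ : c' ∈ R ∧ c' ≠ v ∧ par c' = v := by simpa [hC] using hc'
          rcases Nat.eq_zero_or_pos m with h0 | hp
          · exact hne (by simpa [h0] using hm)
          · have hvc' : par^[m - 1] v = c' := by
              rw [← hcp, ← Function.iterate_succ_apply, show (m - 1).succ = m by omega]
              exact hm
            exact hc'v (reach_antisymm par r hroot hacyc
              ⟨1, by simpa using hc'p⟩ ⟨m - 1, hvc'⟩)
        intro c hc c' hc' hne
        rw [Finset.disjoint_left]
        intro u huc huc'
        obtain ⟨_, hrc⟩ := mem_filter.mp huc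
        obtain ⟨_, hrc'⟩ := mem_filter.mp huc'
        rcases reach_total par hrc hrc' with h | h
        · exact key c hc c' hc' hne h
        · exact key c' hc' c hc hne.symm h
      -- the subtree of v minus v is covered by children subtrees
      have hbiU : D v \ {v} ⊆ C.biUnion D := by
        intro u hu
        rw [mem_sdiff, mem_singleton] at hu
        obtain ⟨huR, hre⟩ := mem_filter.mp hu.1
        have hre' : ∃ j, par^[j] u = v := hre
        have hj0 : par^[Nat.find hre'] u = v := Nat.find_spec hre'
        have hj0ne : Nat.find hre' ≠ 0 := by
          intro h
          exact hu.2 (by simpa [h] using hj0)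
        set c := par^[Nat.find hre' - 1] u with hc'
        have hstep : par^[Nat.find hre'] u = par (par^[Nat.find hre' - 1] u) := by
          conv_lhs => rw [show Nat.find hre' = (Nat.find hre' - 1) + 1 by omega]
          rw [Function.iterate_succ_apply']
        have hcp : par c = v := by
          rw [hc', ← hstep]
          exact hj0
        have hcne : c ≠ v := fun h =>
          Nat.find_min hre' (show Nat.find hre' - 1 < Nat.find hre' by omega) h
        have hcR : c ∈ R := iter_mem par R hRcl _ u huR
        exact mem_biUnion.mpr ⟨c, mem_filter.mpr ⟨hcR, hcne, hcp⟩,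
          mem_filter.mpr ⟨huR, Nat.find hre' - 1, rfl⟩⟩
      -- size bound on D v
      have hCcard : C.card ≤ Δ := by
        have h1 : C ⊆ Finset.univ.filter (fun u => u ≠ v ∧ par u = v) := by
          intro c hc
          simp only [mem_filter, mem_univ, true_and]
          exact (mem_filter.mp hc).2
        have h2 := hdeg v
        have h3 := Finset.card_le_card h1
        omega
      have hmul : Δ * t = Δ * (t - 1) + Δ := by
        conv_lhs => rw [show t = (t - 1) + 1 by omega]
        rw [Nat.mul_succ]
      have hDvcard : (D v).card ≤ 1 + Δ * (t - 1) := by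
        have h1 : (C.biUnion D).card ≤ Δ * (t - 1) := by
          calc (C.biUnion D).card ≤ ∑ c ∈ C, (D c).card := Finset.card_biUnion_le
            _ ≤ ∑ _c ∈ C, (t - 1) := Finset.sum_le_sum (fun c hc => by
                have := hchild c hc; omega)
            _ = C.card * (t - 1) := by rw [Finset.sum_const, smul_eq_mul]
            _ ≤ Δ * (t - 1) := Nat.mul_le_mul_right _ hCcard
        have h2 : (D v \ {v}).card = (D v).card - 1 := by
          rw [Finset.card_sdiff_of_subset (by simpa using hvmemD)]
          simp
        have h3 := Finset.card_le_card hbiU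
        have h4 : 1 ≤ (D v).card := Finset.card_pos.mpr ⟨v, hvmemD⟩
        omega
      have hDle : (D v).card ≤ 2 * Δ * t := by
        have h2 : 2 * Δ * t = 2 * (Δ * (t - 1) + Δ) := by rw [← hmul]; ring
        omega
      set R' := R \ D v with hR'
      have hDsubR : D v ⊆ R := Finset.filter_subset _ _
      have hR'cl : ∀ u ∈ R', par u ∈ R' := by
        intro u hu
        rw [mem_sdiff] at hu ⊢
        refine ⟨hRcl u hu.1, fun hp => hu.2 ?_⟩
        obtain ⟨_, j, hj⟩ := mem_filter.mp hp
        exact mem_filter.mpr ⟨hu.1, j + 1, by rw [Function.iterate_succ_apply]; exact hj⟩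
      have hR'card : R'.card = R.card - (D v).card := Finset.card_sdiff_of_subset hDsubR
      have htle : t ≤ Δ * (t - 1) + Δ := by
        have : 1 * t ≤ Δ * t := Nat.mul_le_mul_right t (by omega)
        omega
      have hR't : t ≤ R'.card := by
        have h2 : 2 * Δ * t = 2 * (Δ * (t - 1) + Δ) := by rw [← hmul]; ring
        omega
      have hR'N : R'.card ≤ N := by
        have : 1 ≤ (D v).card := Finset.card_pos.mpr ⟨v, hvmemD⟩
        omega
      obtain ⟨k', S', tt', hcov', hsub', hdisj', htt', hcl', hreach', hsz'⟩ :=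
        ih R' hR'N hR'cl hR't
      refine ⟨k' + 1, Fin.cons (D v) S', Fin.cons v tt', ?_, ?_, ?_, ?_, ?_, ?_, ?_⟩
      · intro u hu
        by_cases hP : u ∈ D v
        · exact ⟨0, by simpa using hP⟩
        · obtain ⟨i, hi⟩ := hcov' u (mem_sdiff.mpr ⟨hu, hP⟩)
          exact ⟨i.succ, by simpa using hi⟩
      · intro i
        rcases Fin.eq_zero_or_eq_succ i with rfl | ⟨i', rfl⟩
        · simpa using hDsubR
        · simpa using (hsub' i').trans sdiff_subset
      · have key0 : ∀ j' : Fin k', Disjoint (D v) (S' j') := by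
          intro j'
          rw [Finset.disjoint_left]
          intro u hu hu'
          exact (mem_sdiff.mp (hsub' j' hu')).2 hu
        intro i j hij
        rcases Fin.eq_zero_or_eq_succ i with rfl | ⟨i', rfl⟩ <;>
          rcases Fin.eq_zero_or_eq_succ j with rfl | ⟨j', rfl⟩
        · exact absurd rfl hij
        · simpa using key0 j'
        · simpa using (key0 i').symm
        · simpa using hdisj' i' j' (fun h => hij (congrArg Fin.succ h))
      · intro i
        rcases Fin.eq_zero_or_eq_succ i with rfl | ⟨i', rfl⟩
        · simpa using hvmemD
        · simpa using htt' i'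
      · intro i u hu hne
        rcases Fin.eq_zero_or_eq_succ i with rfl | ⟨i', rfl⟩
        · simp only [Fin.cons_zero] at hu hne ⊢
          obtain ⟨huR, hre⟩ := mem_filter.mp hu
          have hre' : ∃ j, par^[j] u = v := hre
          have hj0 : par^[Nat.find hre'] u = v := Nat.find_spec hre'
          have hj0ne : Nat.find hre' ≠ 0 := by
            intro h
            exact hne (by simpa [h] using hj0)
          refine mem_filter.mpr ⟨hRcl u huR, Nat.find hre' - 1, ?_⟩
          rw [← Function.iterate_succ_apply,
            show (Nat.find hre' - 1).succ = Nat.find hre' by omega]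
          exact hj0
        · simp only [Fin.cons_succ] at hu hne ⊢
          exact hcl' i' u hu hne
      · intro i u hu
        rcases Fin.eq_zero_or_eq_succ i with rfl | ⟨i', rfl⟩
        · simp only [Fin.cons_zero] at hu ⊢
          exact (mem_filter.mp hu).2
        · simp only [Fin.cons_succ] at hu ⊢
          exact hreach' i' u hu
      · intro i
        rcases Fin.eq_zero_or_eq_succ i with rfl | ⟨i', rfl⟩
        · simpa using ⟨hvt, hDle⟩
        · simpa using hsz' i'

/-- Tree partition lemma (Proposition 6.5 of [JKKO:19]).  A rooted tree `(T, r)` on `n`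
vertices with maximum degree at most `Δ` can be partitioned into pairwise disjoint rooted
subtrees `(T_1, t_1), …, (T_k, t_k)`, each of size between `t` and `2Δt`, with `T_i` lying
below its root `t_i` and the depths of the roots non-decreasing.

The rooted tree is encoded by its parent function `par` (with `par r = r`), so the subtree
`T(v)` below a vertex `v` consists of the vertices `u` with `par^[j] u = v` for some `j`,
the depth of `v` is the least `j` with `par^[j] v = r`, and the degree of `v` is the number
of its children plus one (for the edge to its parent) unless `v = r`.  A rooted subtree
`(S, t)` is encoded by `t ∈ S` together with closure of `S \ {t}` under parents. -/
theorem tree_partition {V : Type*} [Fintype V] [DecidableEq V]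
    (n Δ t : ℕ) (hn : 2 ≤ n) (hΔ : 2 ≤ Δ) (ht1 : 1 ≤ t) (htn : t ≤ n)
    (hcard : Fintype.card V = n)
    (r : V) (par : V → V) (hroot : par r = r)
    (hacyc : ∀ v : V, ∃ j : ℕ, par^[j] v = r)
    (hdeg : ∀ v : V,
      (Finset.univ.filter (fun u => u ≠ v ∧ par u = v)).card
        + (if v = r then 0 else 1) ≤ Δ) :
    ∃ (k : ℕ) (S : Fin k → Finset V) (tt : Fin k → V),
      (∀ v : V, ∃ i, v ∈ S i) ∧
      (∀ i j, i ≠ j → Disjoint (S i) (S j)) ∧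
      (∀ i, tt i ∈ S i) ∧
      (∀ i, ∀ v ∈ S i, v ≠ tt i → par v ∈ S i) ∧
      (∀ i, ∀ v ∈ S i, ∃ j : ℕ, par^[j] v = tt i) ∧
      (∀ i j, i ≤ j → Nat.find (hacyc (tt i)) ≤ Nat.find (hacyc (tt j))) ∧
      (∀ i, t ≤ (S i).card ∧ (S i).card ≤ 2 * Δ * t) := by
  obtain ⟨k, S, tt, hcov, _hsub, hdisj, htt, hcl, hreach, hsz⟩ :=
    tree_partition_aux Δ t hΔ ht1 r par hroot hacyc hdeg
      (Fintype.card V) Finset.univ (by rw [Finset.card_univ]) (fun u _ => mem_univ _)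
      (by rw [Finset.card_univ, hcard]; exact htn)
  set f : Fin k → ℕ := fun i => Nat.find (hacyc (tt i)) with hf
  set σ := Tuple.sort f with hσ
  refine ⟨k, S ∘ σ, tt ∘ σ, ?_, ?_, ?_, ?_, ?_, ?_, ?_⟩
  · intro u
    obtain ⟨i, hi⟩ := hcov u (mem_univ u)
    exact ⟨σ.symm i, by simpa using hi⟩
  · intro i j hij
    exact hdisj (σ i) (σ j) (fun h => hij (σ.injective h))
  · intro i; exact htt (σ i)
  · intro i; exact hcl (σ i)
  · intro i; exact hreach (σ i)
  · intro i j hij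
    exact Tuple.monotone_sort f hij
  · intro i; exact hsz (σ i)
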